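/- arXiv:1801.04642 — 4 statements merged into one kernel-verified Lean document; each statement's English description precedes it below -/
import Mathlib

section
/- Let n, N_p, N_c, r_p, r_c > 0 and 0 < η < 1 with η < 1 - N_c/(n·N_p). Define G(α) piecewise on [0,1] by G(α) = α·η·n²·N_p·(r_p+r_c) for 0 ≤ α < N_c/(N_c + η·n·N_p), and G(α) = η·n·(r_p+r_c)·(α·((1-η)·n·N_p - N_c) + N_c) for N_c/(N_c + η·n·N_p) ≤ α ≤ 1. Then G attains its maximum on [0,1] at α = 1, with maximum value η·(1-η)·n²·N_p·(r_p+r_c). -/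
theorem stmt_0 (n Np Nc rp rc η : ℝ)
    (hn : 0 < n) (hNp : 0 < Np) (hNc : 0 < Nc) (hrp : 0 < rp) (hrc : 0 < rc)
    (hη0 : 0 < η) (hη1 : η < 1)
    (hcase : η < 1 - Nc / (n * Np))
    (G : ℝ → ℝ)
    (hG : ∀ α, G α =
      if α < Nc / (Nc + η * n * Np) then
        α * η * n ^ 2 * Np * (rp + rc)
      else
        η * n * (rp + rc) * (α * ((1 - η) * n * Np - Nc) + Nc)) :
    (∀ α ∈ Set.Icc (0 : ℝ) 1, G α ≤ G 1) ∧
      G 1 = η * (1 - η) * n ^ 2 * Np * (rp + rc) := by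
  have hnp : 0 < n * Np := by positivity
  have hkey : Nc < (1 - η) * (n * Np) := by
    have := (div_lt_iff₀ hnp).mp (by linarith : Nc / (n * Np) < 1 - η)
    linarith
  have hden : 0 < Nc + η * n * Np := by positivity
  have hτ1 : Nc / (Nc + η * n * Np) < 1 := by
    rw [div_lt_one hden]; nlinarith
  have hG1 : G 1 = η * (1 - η) * n ^ 2 * Np * (rp + rc) := by
    rw [hG, if_neg (by linarith)]; ring
  refine ⟨?_, hG1⟩
  rintro α ⟨h0, h1⟩
  rw [hG α, hG1]
  split_ifs with h
  · have h2 : α * (Nc + η * n * Np) < Nc := (lt_div_iff₀ hden).mp h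
    have h3 : α ≤ 1 - η := by nlinarith
    have hpos : (0:ℝ) ≤ η * n ^ 2 * Np * (rp + rc) := by positivity
    nlinarith [mul_le_mul_of_nonneg_right h3 hpos]
  · have hC : 0 < (1 - η) * n * Np - Nc := by nlinarith
    nlinarith [mul_nonneg (mul_nonneg (by positivity : (0:ℝ) ≤ η * n * (rp + rc))
      (sub_nonneg.mpr h1)) hC.le]
end

section
/- Let n, N_p, N_c, r_p, r_c > 0 and 0 < η < 1 with η ≥ 1 - N_c/(n·N_p). Define G(α) piecewise on [0,1] by G(α) = α·η·n²·N_p·(r_p+r_c) for 0 ≤ α < N_c/(N_c + η·n·N_p), and G(α) = η·n·(r_p+r_c)·(α·((1-η)·n·N_p - N_c) + N_c) for N_c/(N_c + η·n·N_p) ≤ α ≤ 1. Then G attains its maximum on [0,1] at α* = N_c/(N_c + η·n·N_p), with maximum value η·n²·N_c·N_p·(r_p+r_c)/(N_c + η·n·N_p). -/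
theorem stmt_1 (n Np Nc rp rc η : ℝ)
    (hn : 0 < n) (hNp : 0 < Np) (hNc : 0 < Nc) (hrp : 0 < rp) (hrc : 0 < rc)
    (hη0 : 0 < η) (hη1 : η < 1)
    (hcase : η ≥ 1 - Nc / (n * Np))
    (G : ℝ → ℝ)
    (hG : ∀ α, G α =
      if α < Nc / (Nc + η * n * Np) then
        α * η * n ^ 2 * Np * (rp + rc)
      else
        η * n * (rp + rc) * (α * ((1 - η) * n * Np - Nc) + Nc)) :
    (∀ α ∈ Set.Icc (0 : ℝ) 1, G α ≤ G (Nc / (Nc + η * n * Np))) ∧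
      G (Nc / (Nc + η * n * Np)) =
        η * n ^ 2 * Nc * Np * (rp + rc) / (Nc + η * n * Np) := by
  have hden : 0 < Nc + η * n * Np := by positivity
  have hnNp : 0 < n * Np := mul_pos hn hNp
  have hcoef : (1 - η) * n * Np - Nc ≤ 0 := by
    have h1 : (1 - η) ≤ Nc / (n * Np) := by linarith
    have h2 : (1 - η) * (n * Np) ≤ Nc := (le_div_iff₀ hnNp).mp h1
    nlinarith
  have hval : G (Nc / (Nc + η * n * Np)) =
      η * n ^ 2 * Nc * Np * (rp + rc) / (Nc + η * n * Np) := by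
    rw [hG]
    rw [if_neg (lt_irrefl _)]
    field_simp
    ring
  refine ⟨fun α hα => ?_, hval⟩
  rw [hG, hval]
  by_cases h : α < Nc / (Nc + η * n * Np)
  · rw [if_pos h]
    have hA : α * (Nc + η * n * Np) ≤ Nc := (le_div_iff₀ hden).mp h.le
    rw [le_div_iff₀ hden]
    nlinarith [mul_le_mul_of_nonneg_right hA (by positivity : (0:ℝ) ≤ η * n ^ 2 * Np * (rp + rc))]
  · rw [if_neg h]
    push_neg at h
    have hA : Nc ≤ α * (Nc + η * n * Np) := (div_le_iff₀ hden).mp h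
    rw [le_div_iff₀ hden]
    have hkey : (α * (Nc + η * n * Np) - Nc) * ((1 - η) * n * Np - Nc) ≤ 0 :=
      mul_nonpos_of_nonneg_of_nonpos (by linarith) hcoef
    nlinarith [mul_le_mul_of_nonneg_right hkey (by positivity : (0:ℝ) ≤ η * n * (rp + rc))]
end

section
/- Let n, N_p, N_c, r_p, r_c > 0, 0 < η ≤ 1, with η·n·N_p ≥ N_c and η > 1 - N_c/(n·N_p). The welfare function R(α) = (r_p+r_c)·(α·(N_p·η·(1-η)·n² - N_c·η·n) + N_c·η·n) is strictly decreasing in α, and on the feasible interval [N_c/(N_c+η·n·N_p), 1] it is maximized at α* = N_c/(N_c + η·n·N_p), where total production α*·η·n·N_p equals (1-α*)·N_c, yielding maximum welfare η·n²·N_c·N_p·(r_p+r_c)/(N_c + η·n·N_p). -/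
theorem stmt_5 (n Np Nc rp rc η : ℝ)
    (hn : 0 < n) (hNp : 0 < Np) (hNc : 0 < Nc) (hrp : 0 < rp) (hrc : 0 < rc)
    (hη0 : 0 < η) (hη1 : η ≤ 1)
    (hsupply : η * n * Np ≥ Nc)
    (hcase : η > 1 - Nc / (n * Np))
    (R : ℝ → ℝ)
    (hR : ∀ α, R α = (rp + rc) * (α * (Np * η * (1 - η) * n ^ 2 - Nc * η * n) + Nc * η * n)) :
    StrictAnti R ∧
    (∀ α ∈ Set.Icc (Nc / (Nc + η * n * Np)) 1, R α ≤ R (Nc / (Nc + η * n * Np))) ∧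
    (Nc / (Nc + η * n * Np)) * η * n * Np = (1 - Nc / (Nc + η * n * Np)) * Nc ∧
    R (Nc / (Nc + η * n * Np)) = η * n ^ 2 * Nc * Np * (rp + rc) / (Nc + η * n * Np) := by
  have hnp : 0 < n * Np := mul_pos hn hNp
  have hkey : (1 - η) * (n * Np) < Nc := by
    have h : 1 - η < Nc / (n * Np) := by linarith
    exact (lt_div_iff₀ hnp).mp h
  have hcoeff : Np * η * (1 - η) * n ^ 2 - Nc * η * n < 0 := by nlinarith
  have hsa : StrictAnti R := by
    intro a b hab
    rw [hR, hR]
    nlinarith [mul_pos (add_pos hrp hrc) (mul_pos (sub_pos.mpr hab) (neg_pos.mpr hcoeff))]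
  have hden : 0 < Nc + η * n * Np := by nlinarith
  refine ⟨hsa, ?_, ?_, ?_⟩
  · intro α hα
    exact hsa.antitone hα.1
  · field_simp
    ring
  · rw [hR]
    field_simp
    ring
end

section
/- Let n, N_p, N_c, r_p, r_c > 0, 0 < η ≤ 1, and set K = (N_p·r_p)/(N_c·r_c) and α* = N_c/(N_c + η·n·N_p). For all δ > 0 with α* + δ ≤ 1, the inequality K·(α*·η²·n²·(α*+δ)/(α*·η·n + δ) - α*·η·n) < δ holds if and only if δ > α*·η·n·(K·η·n - K - 1). In particular, this inequality holds for all δ > 0 if and only if η ≤ N_c·r_c/(n·N_p·r_p) + 1/n. -/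
theorem stmt_9 (n Np Nc rp rc η : ℝ)
    (hn : 0 < n) (hNp : 0 < Np) (hNc : 0 < Nc) (hrp : 0 < rp) (hrc : 0 < rc)
    (hη0 : 0 < η) (hη1 : η ≤ 1) (hηn : 1 < η * n)
    (K : ℝ) (hK : K = (Np * rp) / (Nc * rc))
    (α : ℝ) (hα : α = Nc / (Nc + η * n * Np)) :
    (∀ δ : ℝ, 0 < δ → α + δ ≤ 1 →
      (K * (α * η ^ 2 * n ^ 2 * (α + δ) / (α * η * n + δ) - α * η * n) < δ ↔
        δ > α * η * n * (K * η * n - K - 1))) ∧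
    ((∀ δ : ℝ, 0 < δ →
        K * (α * η ^ 2 * n ^ 2 * (α + δ) / (α * η * n + δ) - α * η * n) < δ) ↔
      η ≤ Nc * rc / (n * Np * rp) + 1 / n) := by
  have hηnpos : 0 < η * n := by positivity
  have hK0 : 0 < K := by rw [hK]; positivity
  have hden : 0 < Nc + η * n * Np := by positivity
  have hα0 : 0 < α := by rw [hα]; positivity
  have hA : 0 < α * η * n := by positivity
  have hKval : K * (Nc * rc) = Np * rp := by
    rw [hK]; field_simp
  have key : ∀ δ : ℝ, 0 < δ →
      (K * (α * η ^ 2 * n ^ 2 * (α + δ) / (α * η * n + δ) - α * η * n) < δ ↔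
        δ > α * η * n * (K * η * n - K - 1)) := by
    intro δ hδ
    have hd : 0 < α * η * n + δ := by positivity
    have heq : K * (α * η ^ 2 * n ^ 2 * (α + δ) / (α * η * n + δ) - α * η * n)
        = α * η * n * (η * n - 1) * K * δ / (α * η * n + δ) := by
      field_simp
      ring
    rw [heq, div_lt_iff₀ hd]
    constructor <;> intro h <;> nlinarith [mul_pos hδ hδ, mul_pos hA hδ]
  have hiff : η ≤ Nc * rc / (n * Np * rp) + 1 / n ↔ K * η * n - K - 1 ≤ 0 := by
    have e1 : Nc * rc / (n * Np * rp) + 1 / n = (Nc * rc + Np * rp) / (n * Np * rp) := by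
      field_simp
    rw [e1, le_div_iff₀ (by positivity)]
    constructor <;> intro h <;> nlinarith [mul_pos hNc hrc]
  refine ⟨fun δ hδ _ => key δ hδ, ?_⟩
  constructor
  · intro hall
    rw [hiff]
    by_contra hc
    push_neg at hc
    have hδ0 : 0 < α * η * n * (K * η * n - K - 1) / 2 := by positivity
    have := (key _ hδ0).mp (hall _ hδ0)
    nlinarith [mul_pos hA hc]
  · intro hle δ hδ
    rw [key δ hδ]
    have hc := hiff.mp hle
    nlinarith [mul_pos hA hδ]
end
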